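/- Every nondecreasing parking function π of length n ≥ 1 can be written uniquely as α ≻ 1 ≺ β, where α and β are (possibly empty) nondecreasing parking functions; here for nondecreasing parking functions α of length k and β, α ≻ β denotes concatenation α · β[k] (β with all letters shifted up by k), and α ≺ β denotes α · β[max(α)−1] (β shifted up by max(α)−1, with max of the empty word taken as 1). Consequently nondecreasing parking functions of length n are in bijection with binary trees with n nodes. -/

import Mathlib

/-- A word is a nondecreasing parking function if it is nondecreasing,
its letters are at least 1 and its `i`-th letter is at most `i` (1-indexed). -/
def IsNDPF (w : List ℕ) : Prop :=
  w.Pairwise (· ≤ ·) ∧ ∀ (i : ℕ) (h : i < w.length), 1 ≤ w[i] ∧ w[i] ≤ i + 1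

/-- `w` with `m` added to each letter. -/
def shiftW (m : ℕ) (w : List ℕ) : List ℕ := w.map (· + m)

/-- `α ≻ β = α · β[|α|]`. -/
def opSucc (α β : List ℕ) : List ℕ := α ++ shiftW α.length β

/-- `α ≺ β = α · β[max(α) − 1]`, with the maximum of the empty word taken as 1. -/
def opPrec (α β : List ℕ) : List ℕ := α ++ shiftW (α.foldr max 1 - 1) β

/- ### Auxiliary development -/

lemma sorted_le {w : List ℕ} (h : w.Pairwise (· ≤ ·)) {i j : ℕ}
    (hij : i ≤ j) (hj : j < w.length) :
    w[i]'(by omega) ≤ w[j] := by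
  rcases Nat.lt_or_ge i j with hlt | hge
  · exact List.pairwise_iff_getElem.mp h i j (by omega) hj hlt
  · have hij' : i = j := by omega
    subst hij'; exact le_refl _

lemma ndpf_mem_bounds {w : List ℕ} (h : IsNDPF w) {x : ℕ} (hx : x ∈ w) :
    1 ≤ x ∧ x ≤ w.length := by
  obtain ⟨i, hi, rfl⟩ := List.mem_iff_getElem.mp hx
  obtain ⟨h1, h2⟩ := h.2 i hi
  exact ⟨h1, by omega⟩

/-- Canonical combined word `α · (|α|+1) · β[|α|]`. -/
def combine (α β : List ℕ) : List ℕ := α ++ (α.length + 1) :: β.map (· + α.length)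

lemma combine_length (α β : List ℕ) :
    (combine α β).length = α.length + β.length + 1 := by
  simp [combine]; omega

lemma foldr_max_of_le {l : List ℕ} {b : ℕ} (h : ∀ x ∈ l, x ≤ b) : l.foldr max b = b := by
  induction l with
  | nil => rfl
  | cons a l ih =>
    simp only [List.foldr_cons]
    rw [ih (fun x hx => h x (by simp [hx]))]
    exact Nat.max_eq_right (h a (by simp))

lemma op_eq_combine {α : List ℕ} (β : List ℕ) (hα : IsNDPF α) :
    opPrec (opSucc α [1]) β = combine α β := by
  have h1 : opSucc α [1] = α ++ [α.length + 1] := by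
    simp [opSucc, shiftW, Nat.add_comm]
  have h2 : (α ++ [α.length + 1]).foldr max 1 = α.length + 1 := by
    rw [List.foldr_append]
    simp only [List.foldr_cons, List.foldr_nil]
    rw [Nat.max_eq_left (by omega)]
    exact foldr_max_of_le (fun x hx => by
      have := (ndpf_mem_bounds hα hx).2; omega)
  rw [opPrec, h1, h2]
  simp [combine, shiftW]

lemma combine_getElem_lt {α β : List ℕ} {i : ℕ} (h : i < α.length)
    {h' : i < (combine α β).length} : (combine α β)[i] = α[i] := by
  simp only [combine] at h' ⊢
  rw [List.getElem_append]
  simp [h]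

lemma combine_getElem_eq {α β : List ℕ}
    {h' : α.length < (combine α β).length} :
    (combine α β)[α.length] = α.length + 1 := by
  simp only [combine] at h' ⊢
  rw [List.getElem_append]
  simp

lemma combine_getElem_gt {α β : List ℕ} {i : ℕ} (h : α.length < i)
    {h' : i < (combine α β).length} :
    (combine α β)[i] = β[i - α.length - 1]'(by
      have := combine_length α β; omega) + α.length := by
  have hl : i < α.length + β.length + 1 := by rw [← combine_length α β]; exact h'
  simp only [combine] at h' ⊢
  rw [List.getElem_append, dif_neg (by omega)]
  set j := i - α.length - 1 with hjdef
  have h3 : i - α.length = j + 1 := by omega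
  simp only [h3, List.getElem_cons_succ, List.getElem_map, Nat.add_sub_cancel]

lemma combine_ndpf {α β : List ℕ} (hα : IsNDPF α) (hβ : IsNDPF β) :
    IsNDPF (combine α β) := by
  have hlen := combine_length α β
  constructor
  · rw [List.pairwise_iff_getElem]
    intro i j hi hj hij
    rcases Nat.lt_trichotomy j α.length with hj1 | hj1 | hj1
    · rw [combine_getElem_lt (by omega), combine_getElem_lt hj1]
      exact sorted_le hα.1 (le_of_lt hij) hj1
    · subst hj1
      rw [combine_getElem_lt hij, combine_getElem_eq]
      have := (hα.2 i hij).2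
      omega
    · have hjb : j - α.length - 1 < β.length := by omega
      rw [combine_getElem_gt hj1]
      have hβj := (hβ.2 (j - α.length - 1) hjb).1
      rcases Nat.lt_trichotomy i α.length with hi1 | hi1 | hi1
      · rw [combine_getElem_lt hi1]
        have := (hα.2 i hi1).2
        omega
      · subst hi1
        rw [combine_getElem_eq]
        omega
      · rw [combine_getElem_gt hi1]
        have hs : β[i - α.length - 1]'(by omega) ≤ β[j - α.length - 1]'hjb :=
          sorted_le hβ.1 (by omega) hjb
        omega
  · intro i hi
    rcases Nat.lt_trichotomy i α.length with hi1 | hi1 | hi1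
    · rw [combine_getElem_lt hi1]; exact hα.2 i hi1
    · subst hi1
      rw [combine_getElem_eq]
      omega
    · rw [combine_getElem_gt hi1]
      have hib : i - α.length - 1 < β.length := by omega
      have := hβ.2 (i - α.length - 1) hib
      omega

lemma decomp_exists_unique {π : List ℕ} (h : IsNDPF π) (hn : 0 < π.length) :
    ∃! p : List ℕ × List ℕ, IsNDPF p.1 ∧ IsNDPF p.2 ∧ π = combine p.1 p.2 := by
  classical
  set k := Nat.findGreatest (fun i => i < π.length ∧ π.getD i 0 = i + 1) (π.length - 1)
    with hkdef
  have hP0 : 0 < π.length ∧ π.getD 0 0 = 0 + 1 :=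
    ⟨hn, by rw [List.getD_eq_getElem π 0 hn]; have := h.2 0 hn; omega⟩
  obtain ⟨hklt, hπk'⟩ : k < π.length ∧ π.getD k 0 = k + 1 :=
    Nat.findGreatest_spec (P := fun i => i < π.length ∧ π.getD i 0 = i + 1)
      (Nat.zero_le _) hP0
  have hπk : π[k] = k + 1 := by rw [← List.getD_eq_getElem π 0 hklt]; exact hπk'
  have hlt : ∀ i (hi : i < π.length), k < i → π[i] ≤ i := by
    intro i hi hki
    have h1 := (h.2 i hi).2
    by_contra hc
    exact Nat.findGreatest_is_greatest hki (by omega)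
      ⟨hi, by rw [List.getD_eq_getElem π 0 hi]; omega⟩
  have hge : ∀ i (hi : i < π.length), k ≤ i → k + 1 ≤ π[i] := by
    intro i hi hki
    calc k + 1 = π[k] := hπk.symm
      _ ≤ π[i] := sorted_le h.1 hki hi
  have htklen : (π.take k).length = k := by simp; omega
  have hdlen : ((π.drop (k+1)).map (· - k)).length = π.length - (k+1) := by simp
  refine ⟨(π.take k, (π.drop (k+1)).map (· - k)), ⟨?_, ?_, ?_⟩, ?_⟩
  · -- α is NDPF
    constructor
    · exact h.1.sublist (List.take_sublist k π)
    · intro i hi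
      simp only [List.getElem_take]
      exact h.2 i (by rw [htklen] at hi; omega)
  · -- β is NDPF
    constructor
    · rw [List.pairwise_iff_getElem]
      intro i j hi hj hij
      rw [hdlen] at hi hj
      simp only [List.getElem_map, List.getElem_drop]
      have h1 : π[k+1+i]'(by omega) ≤ π[k+1+j]'(by omega) :=
        sorted_le h.1 (by omega) (by omega)
      omega
    · intro j hj
      rw [hdlen] at hj
      simp only [List.getElem_map, List.getElem_drop]
      have h1 := hge (k+1+j) (by omega) (by omega)
      have h2 := hlt (k+1+j) (by omega) (by omega)
      omega
  · -- the decomposition equation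
    have hmap : ((π.drop (k+1)).map (· - k)).map (· + (π.take k).length)
        = π.drop (k+1) := by
      apply List.ext_getElem (by simp)
      intro j h1 h2
      have hj' : j < π.length - (k+1) := by simpa using h2
      simp only [List.getElem_map, List.getElem_drop, List.length_take]
      have := hge (k+1+j) (by omega) (by omega)
      omega
    rw [combine, hmap, htklen]
    have hcons : (k+1) :: π.drop (k+1) = π.drop k := by
      rw [List.drop_eq_getElem_cons hklt, hπk]
    rw [hcons, List.take_append_drop]
  · -- uniqueness
    rintro ⟨α', β'⟩ ⟨h1, h2, h3⟩
    simp only at h1 h2 h3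
    have hlen' : π.length = α'.length + β'.length + 1 := by rw [h3, combine_length]
    have hπk2 : π[α'.length]'(by omega) = α'.length + 1 := by
      simp only [h3]
      exact combine_getElem_eq (h' := by rw [combine_length]; omega)
    have hlt2 : ∀ i (hi : i < π.length), α'.length < i → π[i] ≤ i := by
      intro i hi hki
      have hval : π[i]'hi = β'[i - α'.length - 1]'(by omega) + α'.length := by
        simp only [h3]
        exact combine_getElem_gt hki (h' := by rw [combine_length]; omega)
      rw [hval]
      have := (h2.2 (i - α'.length - 1) (by omega)).2
      omega
    have hkk : α'.length = k := by
      have hle1 : α'.length ≤ k := Nat.le_findGreatest (by omega)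
        ⟨by omega, by rw [List.getD_eq_getElem π 0 (by omega)]; exact hπk2⟩
      rcases Nat.eq_or_lt_of_le hle1 with heq | hlt3
      · exact heq
      · exact absurd (hlt2 k hklt hlt3) (by omega)
    have hα'eq : α' = π.take k := by
      rw [← hkk, h3, combine, List.take_left' rfl]
    have hβ'eq : β' = (π.drop (k+1)).map (· - k) := by
      have hdrop : π.drop (k+1) = β'.map (· + k) := by
        rw [h3, combine, ← hkk]
        have hsplit : α' ++ (α'.length + 1) :: β'.map (· + α'.length) =
            (α' ++ [α'.length + 1]) ++ β'.map (· + α'.length) := by simp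
        rw [hsplit, List.drop_left' (by simp)]
      rw [hdrop]
      apply List.ext_getElem (by simp)
      intro j hj1 hj2
      simp only [List.getElem_map]
      omega
    simp only [Prod.mk.injEq]
    exact ⟨hα'eq, hβ'eq⟩

/- ### Trees -/

def toNDPF : Tree Unit → List ℕ
  | BinaryTree.nil => []
  | BinaryTree.node _ l r => combine (toNDPF l) (toNDPF r)

lemma ndpf_nil : IsNDPF [] :=
  ⟨List.Pairwise.nil, fun i hi => by simp at hi⟩

lemma toNDPF_spec : ∀ t, IsNDPF (toNDPF t) ∧ (toNDPF t).length = t.numNodes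
  | BinaryTree.nil => ⟨ndpf_nil, rfl⟩
  | BinaryTree.node _ l r => by
    obtain ⟨hl1, hl2⟩ := toNDPF_spec l
    obtain ⟨hr1, hr2⟩ := toNDPF_spec r
    refine ⟨combine_ndpf hl1 hr1, ?_⟩
    rw [toNDPF, combine_length, hl2, hr2]; rfl

lemma toNDPF_inj : ∀ t1 t2 : Tree Unit, toNDPF t1 = toNDPF t2 → t1 = t2
  | BinaryTree.nil, BinaryTree.nil, _ => rfl
  | BinaryTree.nil, BinaryTree.node _ l r, h => by
    exfalso
    have : (toNDPF (BinaryTree.node () l r)).length = 0 := by rw [← h]; rfl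
    rw [toNDPF, combine_length] at this
    omega
  | BinaryTree.node _ l r, BinaryTree.nil, h => by
    exfalso
    have : (toNDPF (BinaryTree.node () l r)).length = 0 := by rw [h]; rfl
    rw [toNDPF, combine_length] at this
    omega
  | BinaryTree.node _ l1 r1, BinaryTree.node _ l2 r2, h => by
    rw [toNDPF, toNDPF] at h
    have hπ : IsNDPF (combine (toNDPF l1) (toNDPF r1)) :=
      combine_ndpf (toNDPF_spec l1).1 (toNDPF_spec r1).1
    have hlen : 0 < (combine (toNDPF l1) (toNDPF r1)).length := by
      rw [combine_length]; omega
    obtain ⟨p, hp, hu⟩ := decomp_exists_unique hπ hlen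
    have e1 : (toNDPF l1, toNDPF r1) = p :=
      hu _ ⟨(toNDPF_spec l1).1, (toNDPF_spec r1).1, rfl⟩
    have e2 : (toNDPF l2, toNDPF r2) = p :=
      hu _ ⟨(toNDPF_spec l2).1, (toNDPF_spec r2).1, h⟩
    have e3 : toNDPF l1 = toNDPF l2 ∧ toNDPF r1 = toNDPF r2 := by
      rw [← e2] at e1
      exact ⟨congrArg Prod.fst e1, congrArg Prod.snd e1⟩
    rw [toNDPF_inj l1 l2 e3.1, toNDPF_inj r1 r2 e3.2]

lemma toNDPF_surj : ∀ n (π : List ℕ), IsNDPF π → π.length = n → ∃ t, toNDPF t = π := by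
  intro n
  induction n using Nat.strong_induction_on with
  | _ n ih =>
    intro π hπ hlen
    rcases Nat.eq_zero_or_pos n with rfl | hpos
    · exact ⟨BinaryTree.nil, (List.length_eq_zero_iff.mp hlen).symm⟩
    · obtain ⟨⟨α, β⟩, ⟨h1, h2, h3⟩, _⟩ := decomp_exists_unique hπ (by omega)
      have hlc : π.length = α.length + β.length + 1 := by rw [h3, combine_length]
      obtain ⟨tl, htl⟩ := ih α.length (by omega) α h1 rfl
      obtain ⟨tr, htr⟩ := ih β.length (by omega) β h2 rfl
      exact ⟨BinaryTree.node () tl tr, by rw [toNDPF, htl, htr, ← h3]⟩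

/- ### Main theorem -/

theorem ndpf_duplicial_decomposition (n : ℕ) (hn : 1 ≤ n) :
    (∀ π : List ℕ, IsNDPF π → π.length = n →
      ∃! p : List ℕ × List ℕ, IsNDPF p.1 ∧ IsNDPF p.2 ∧
        π = opPrec (opSucc p.1 [1]) p.2) ∧
    Nonempty ({w : List ℕ // IsNDPF w ∧ w.length = n} ≃
      {t : Tree Unit // t.numNodes = n}) := by
  constructor
  · intro π hπ hlen
    obtain ⟨p, ⟨h1, h2, h3⟩, hu⟩ := decomp_exists_unique hπ (by omega)
    refine ⟨p, ⟨h1, h2, by rw [op_eq_combine _ h1]; exact h3⟩, ?_⟩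
    rintro q ⟨g1, g2, g3⟩
    exact hu q ⟨g1, g2, by rw [← op_eq_combine _ g1]; exact g3⟩
  · set F : {t : Tree Unit // t.numNodes = n} → {w : List ℕ // IsNDPF w ∧ w.length = n} :=
      fun t => ⟨toNDPF t.1, (toNDPF_spec t.1).1, by rw [(toNDPF_spec t.1).2, t.2]⟩ with hF
    have hbij : Function.Bijective F := by
      constructor
      · rintro ⟨t1, h1⟩ ⟨t2, h2⟩ h
        simp only [hF, Subtype.mk.injEq] at h
        exact Subtype.ext (toNDPF_inj t1 t2 h)
      · rintro ⟨w, hw, hl⟩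
        obtain ⟨t, ht⟩ := toNDPF_surj n w hw hl
        have hnum : t.numNodes = n := by
          rw [← (toNDPF_spec t).2, ht, hl]
        exact ⟨⟨t, hnum⟩, Subtype.ext ht⟩
    exact ⟨(Equiv.ofBijective F hbij).symm⟩
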